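/- arXiv:2010.01671 — 7 statements merged into one kernel-verified Lean document; each statement's English description precedes it below -/
import Mathlib

section
/- If b > 0, c > 0, d ≠ k, and (kb + abck + cd − ck)/(c(d−k)) ≤ 0, then the only solution of the system z + (y−a)x + u = 0, 1 − by − x² = 0, −x − cz = 0, −dxy − ku = 0 with x, y, z, u real is (x,y,z,u) = (0, 1/b, 0, 0). -/
theorem equilibrium_unique (a b c d k : ℝ) (hb : b > 0) (hc : c > 0) (hdk : d ≠ k)
    (hcond : (k*b + a*b*c*k + c*d - c*k) / (c*(d - k)) ≤ 0) :
    ∀ x y z u : ℝ,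
      z + (y - a)*x + u = 0 →
      1 - b*y - x^2 = 0 →
      -x - c*z = 0 →
      -d*x*y - k*u = 0 →
      x = 0 ∧ y = 1/b ∧ z = 0 ∧ u = 0 := by
  intro x y z u h1 h2 h3 h4
  have hD : c*(d-k) ≠ 0 := by
    have : d - k ≠ 0 := sub_ne_zero.mpr hdk
    positivity
  have hED : (k*b + a*b*c*k + c*d - c*k) * (c*(d-k)) ≤ 0 := by
    rcases div_nonpos_iff.mp hcond with ⟨hE, hDn⟩ | ⟨hE, hDn⟩
    · exact mul_nonpos_of_nonneg_of_nonpos hE hDn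
    · exact mul_nonpos_of_nonpos_of_nonneg hE hDn
  have hx : x = 0 := by
    by_contra hx
    rcases eq_or_ne k 0 with hk | hk
    · subst hk
      have hd : d ≠ 0 := fun h => hdk (h.trans rfl)
      have : c*d ≠ 0 := mul_ne_zero (ne_of_gt hc) hd
      nlinarith [sq_nonneg (c*d), sq_abs (c*d), mul_self_pos.mpr this]
    · have key : x * (c*k*y - a*c*k - k - c*d*y) = 0 := by
        linear_combination c*k*h1 + k*h3 + c*h4
      have hy : c*(k-d)*y - k*(a*c+1) = 0 := by
        rcases mul_eq_zero.mp key with h | h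
        · exact absurd h hx
        · linarith [h]
      have hxE : x^2 * (c*(d-k)) = (k*b + a*b*c*k + c*d - c*k) := by
        linear_combination (-(c*(d-k)))*h2 + b*hy
      have hx2 : x^2 > 0 := by positivity
      have hD2 : (c*(d-k))^2 > 0 := by positivity
      have hsq : x^2 * (c*(d-k))^2 = (k*b + a*b*c*k + c*d - c*k) * (c*(d-k)) := by
        linear_combination (c*(d-k))*hxE
      nlinarith [mul_pos hx2 hD2]
  subst hx
  have hy : y = 1/b := by field_simp; linarith
  have hz : z = 0 := by
    have : c*z = 0 := by linarith
    exact (mul_eq_zero.mp this).resolve_left (ne_of_gt hc)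
  refine ⟨rfl, hy, hz, ?_⟩
  subst hz; linarith [h1]
end

section
/- Let K > 0 and b > 0 with K > b/2, and set ω₊ = √(2Kb − b²). Then ω₊ > 0 and λ = i·ω₊ satisfies λ + b − K + K·e^{−λτ} = 0 when τ = (1/ω₊)·arccos((K−b)/K). -/
theorem imaginary_root_at_tau0 (K b : ℝ) (hK : K > 0) (hb : b > 0) (hKb : K > b/2) :
    let ω := Real.sqrt (2*K*b - b^2)
    let τ := (1/ω) * Real.arccos ((K - b)/K)
    ω > 0 ∧
    (Complex.I * ω) + (b : ℂ) - (K : ℂ) +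
      (K : ℂ) * Complex.exp (-(Complex.I * ω) * τ) = 0 := by
  intro ω τ
  have h2 : 2*K*b - b^2 > 0 := by nlinarith
  have hω : ω > 0 := Real.sqrt_pos.mpr h2
  have hωsq : ω^2 = 2*K*b - b^2 := Real.sq_sqrt h2.le
  refine ⟨hω, ?_⟩
  set x : ℝ := (K - b)/K with hx
  have hx1 : -1 ≤ x := by
    rw [hx, le_div_iff₀ hK]; nlinarith
  have hx2 : x ≤ 1 := by
    rw [hx, div_le_one hK]; nlinarith
  have hωτ : ω * τ = Real.arccos x := by
    show ω * ((1/ω) * Real.arccos x) = Real.arccos x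
    field_simp [τ]
  have hcos : Real.cos (ω * τ) = x := by
    rw [hωτ, Real.cos_arccos hx1 hx2]
  have hsin : Real.sin (ω * τ) = ω / K := by
    rw [hωτ, Real.sin_arccos]
    have : 1 - x^2 = (ω/K)^2 := by
      rw [hx]; field_simp; nlinarith
    rw [this, Real.sqrt_sq (by positivity)]
  have hexp : -(Complex.I * ω) * τ = ((-(ω * τ) : ℝ) : ℂ) * Complex.I := by
    push_cast; ring
  rw [hexp, Complex.exp_mul_I]
  rw [← Complex.ofReal_cos, ← Complex.ofReal_sin, Real.cos_neg, Real.sin_neg,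
    hcos, hsin, hx]
  have hK0 : (K : ℂ) ≠ 0 := by exact_mod_cast hK.ne'
  push_cast
  field_simp
  ring
end

section
/- Let K > 0, b > 0. If K ≤ b/2, then there is no ω > 0 such that λ = iω is a root of λ + b − K + K·e^{−λτ} = 0 for any τ ≥ 0. -/
theorem no_imaginary_root (K b : ℝ) (hK : K > 0) (hb : b > 0) (hKb : K ≤ b/2) :
    ¬ ∃ ω : ℝ, ω > 0 ∧ ∃ τ : ℝ, τ ≥ 0 ∧
      (Complex.I * ω) + (b : ℂ) - (K : ℂ) +
        (K : ℂ) * Complex.exp (-(Complex.I * ω) * τ) = 0 := by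
  rintro ⟨ω, hω, τ, hτ, h⟩
  rw [show -(Complex.I * ω) * τ = ((-(ω*τ) : ℝ) : ℂ) * Complex.I by push_cast; ring,
    Complex.exp_mul_I] at h
  rw [Complex.ext_iff] at h
  simp [Complex.add_re, Complex.add_im, Real.cos_neg, Real.sin_neg, ← Complex.ofReal_mul, Complex.cos_ofReal_re, Complex.sin_ofReal_re, Complex.cos_ofReal_im, Complex.sin_ofReal_im] at h
  obtain ⟨h1, h2⟩ := h
  have hs : Real.sin (ω*τ) > 0 := by nlinarith
  have hc : Real.cos (ω*τ) ≤ -1 := by nlinarith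
  nlinarith [Real.sin_sq_add_cos_sq (ω*τ), Real.neg_one_le_cos (ω*τ), mul_pos hs hs]
end

section
/- Let K > b/2 > 0, ω₊ = √(2Kb − b²), and τ_j = (1/ω₊)·arccos((K−b)/K) + 2jπ/ω₊ for each natural number j. Then for every j, λ = i·ω₊ is a root of λ + b − K + K·e^{−λτ_j} = 0. -/
theorem imaginary_root_at_tauj (K b : ℝ) (hb : b > 0) (hKb : K > b/2) :
    let ωp := Real.sqrt (2*K*b - b^2)
    ∀ j : ℕ,
      let τj := (1/ωp) * Real.arccos ((K - b)/K) + 2*(j:ℝ)*Real.pi/ωp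
      (Complex.I * ωp) + (b : ℂ) - (K : ℂ) +
        (K : ℂ) * Complex.exp (-(Complex.I * ωp) * τj) = 0 := by
  intro ωp j τj
  have hK : (0:ℝ) < K := lt_trans (half_pos hb) hKb
  have hpos : (0:ℝ) < 2*K*b - b^2 := by nlinarith
  have hω2 : ωp^2 = 2*K*b - b^2 := Real.sq_sqrt hpos.le
  have hωpos : (0:ℝ) < ωp := Real.sqrt_pos.mpr hpos
  set θ := Real.arccos ((K-b)/K) with hθ
  have hτ : ωp * τj = θ + (j:ℝ) * (2*Real.pi) := by
    show ωp * ((1/ωp) * θ + 2*(j:ℝ)*Real.pi/ωp) = _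
    field_simp
  have hcos : Real.cos θ = (K-b)/K := by
    apply Real.cos_arccos
    · rw [le_div_iff₀ hK]; nlinarith
    · rw [div_le_one hK]; nlinarith
  have hsin : Real.sin θ = ωp / K := by
    rw [hθ, Real.sin_arccos]
    rw [show (1 - ((K-b)/K)^2) = (2*K*b - b^2)/K^2 by field_simp; ring]
    rw [Real.sqrt_div hpos.le, Real.sqrt_sq hK.le]
  have harg : -(Complex.I * ωp) * τj = ((-(ωp * τj) : ℝ) : ℂ) * Complex.I := by
    push_cast
    ring
  have hexp : Complex.exp (-(Complex.I * ωp) * τj)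
      = ((Real.cos θ : ℂ)) - ((Real.sin θ : ℂ)) * Complex.I := by
    rw [harg, Complex.exp_mul_I, ← Complex.ofReal_cos, ← Complex.ofReal_sin,
        Real.cos_neg, Real.sin_neg, hτ, Real.cos_add_nat_mul_two_pi,
        Real.sin_add_nat_mul_two_pi]
    push_cast
    ring
  rw [hexp, hcos, hsin]
  have hKne : (K:ℂ) ≠ 0 := Complex.ofReal_ne_zero.mpr hK.ne'
  push_cast
  field_simp
  ring
end

section
/- Let λ(τ) = α(τ) + iβ(τ) be a differentiable branch of roots of λ + b − K + K·e^{−λτ} = 0 with λ(τ_j) = i·ω₊, where ω₊ = √(2Kb − b²) > 0 and τ_j ≥ 0 are such that i·ω₊ is a root at τ = τ_j. Then dα/dτ at τ = τ_j equals ω₊² / ((cos(ω₊τ_j) − Kτ_j)² + sin²(ω₊τ_j)), which is strictly positive. -/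
theorem transversality (K b : ℝ) (hb : b > 0) (hKb : K > b/2)
    (ωp : ℝ) (hωp : ωp = Real.sqrt (2*K*b - b^2)) (hωpos : ωp > 0)
    (τj : ℝ) (hτj : τj ≥ 0)
    (α β : ℝ → ℝ) (hα : Differentiable ℝ α) (hβ : Differentiable ℝ β)
    (hroot : ∀ τ : ℝ,
      ((α τ : ℂ) + (β τ : ℂ) * Complex.I) + (b : ℂ) - (K : ℂ) +
        (K : ℂ) * Complex.exp (-(((α τ : ℂ) + (β τ : ℂ) * Complex.I)) * τ) = 0)
    (hval : α τj = 0 ∧ β τj = ωp) :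
    deriv α τj = ωp^2 / ((Real.cos (ωp*τj) - K*τj)^2 + (Real.sin (ωp*τj))^2) ∧
    0 < deriv α τj := by
  obtain ⟨hv1, hv2⟩ := hval
  set a' := deriv α τj with ha'
  set b' := deriv β τj with hb'
  have hK : K > 0 := lt_trans (by linarith) hKb
  -- ωp^2 = 2Kb - b^2
  have hω2 : ωp^2 = 2*K*b - b^2 := by
    rw [hωp, Real.sq_sqrt]; nlinarith
  -- derivative of l
  have hl : HasDerivAt (fun τ : ℝ => ((α τ : ℂ) + (β τ : ℂ) * Complex.I))
      ((a' : ℂ) + (b' : ℂ) * Complex.I) τj :=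
    ((hα τj).hasDerivAt.ofReal_comp).add
      (((hβ τj).hasDerivAt.ofReal_comp).mul_const Complex.I)
  have hid : HasDerivAt (fun τ : ℝ => (τ : ℂ)) 1 τj := by
    simpa using (hasDerivAt_id τj).ofReal_comp
  have hinner : HasDerivAt (fun τ : ℝ => -(((α τ : ℂ) + (β τ : ℂ) * Complex.I)) * τ)
      (-((a' : ℂ) + (b' : ℂ) * Complex.I) * τj +
        -(((α τj : ℂ) + (β τj : ℂ) * Complex.I)) * 1) τj := hl.neg.mul hid
  have hexp := hinner.cexp
  have hg : HasDerivAt (fun τ : ℝ =>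
      ((α τ : ℂ) + (β τ : ℂ) * Complex.I) + (b : ℂ) - (K : ℂ) +
        (K : ℂ) * Complex.exp (-(((α τ : ℂ) + (β τ : ℂ) * Complex.I)) * τ))
      (((a' : ℂ) + (b' : ℂ) * Complex.I) +
        (K : ℂ) * (Complex.exp (-(((α τj : ℂ) + (β τj : ℂ) * Complex.I)) * τj) *
          (-((a' : ℂ) + (b' : ℂ) * Complex.I) * τj +
            -(((α τj : ℂ) + (β τj : ℂ) * Complex.I)) * 1))) τj :=
    ((hl.add_const (b : ℂ)).sub_const (K : ℂ)).add (hexp.const_mul (K : ℂ))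
  have hfun : (fun τ : ℝ =>
      ((α τ : ℂ) + (β τ : ℂ) * Complex.I) + (b : ℂ) - (K : ℂ) +
        (K : ℂ) * Complex.exp (-(((α τ : ℂ) + (β τ : ℂ) * Complex.I)) * τ)) =
      fun _ : ℝ => (0 : ℂ) := funext hroot
  rw [hfun] at hg
  have hD : (((a' : ℂ) + (b' : ℂ) * Complex.I) +
        (K : ℂ) * (Complex.exp (-(((α τj : ℂ) + (β τj : ℂ) * Complex.I)) * τj) *
          (-((a' : ℂ) + (b' : ℂ) * Complex.I) * τj +
            -(((α τj : ℂ) + (β τj : ℂ) * Complex.I)) * 1))) = 0 :=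
    hg.unique (hasDerivAt_const τj 0)
  -- value of exp at τj
  have hval0 : (α τj : ℂ) = 0 := by rw [hv1]; norm_num
  have hval1 : (β τj : ℂ) = (ωp : ℂ) := by rw [hv2]
  rw [hval0, hval1] at hD
  have hexparg : -(((0:ℂ)) + (ωp : ℂ) * Complex.I) * τj = ((-(ωp * τj) : ℝ) : ℂ) * Complex.I := by
    push_cast; ring
  rw [hexparg] at hD
  have hKexp : (K : ℂ) * Complex.exp (((-(ωp * τj) : ℝ) : ℂ) * Complex.I) =
      (K : ℂ) - (b : ℂ) - (ωp : ℂ) * Complex.I := by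
    have h0 := hroot τj
    rw [hval0, hval1, hexparg] at h0
    linear_combination h0
  -- substitute Kexp into hD
  have hD2 : ((a' : ℂ) + (b' : ℂ) * Complex.I) * (1 - ((K : ℂ) - b - (ωp:ℂ)*Complex.I) * τj)
      = ((K : ℂ) - b - (ωp:ℂ)*Complex.I) * ((ωp:ℂ) * Complex.I) := by
    linear_combination hD - (-((a' : ℂ) + (b' : ℂ) * Complex.I) * τj +
      -(((0:ℂ)) + (ωp : ℂ) * Complex.I) * 1) * hKexp
  -- cos/sin relations
  have he : Complex.exp (((-(ωp * τj) : ℝ) : ℂ) * Complex.I) =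
      ((Real.cos (ωp*τj) : ℝ) : ℂ) - ((Real.sin (ωp*τj) : ℝ) : ℂ) * Complex.I := by
    rw [Complex.exp_mul_I, Complex.ofReal_neg, Complex.cos_neg, Complex.sin_neg,
      ← Complex.ofReal_cos, ← Complex.ofReal_sin]; ring
  rw [he] at hKexp
  have hcos : K * Real.cos (ωp * τj) = K - b := by
    have := congrArg Complex.re hKexp
    simp only [Complex.mul_re, Complex.sub_re, Complex.sub_im, Complex.ofReal_re,
      Complex.ofReal_im, Complex.mul_im, Complex.I_re, Complex.I_im] at this
    linarith
  have hsin : K * Real.sin (ωp * τj) = ωp := by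
    have := congrArg Complex.im hKexp
    simp only [Complex.mul_re, Complex.sub_re, Complex.sub_im, Complex.ofReal_re,
      Complex.ofReal_im, Complex.mul_im, Complex.I_re, Complex.I_im] at this
    linarith
  -- extract real/imaginary parts
  set p := 1 - (K - b) * τj with hp
  set q := ωp * τj with hq
  have hre : a' * p - b' * q = ωp^2 := by
    have := congrArg Complex.re hD2
    simp only [Complex.add_re, Complex.sub_re, Complex.mul_re, Complex.mul_im,
      Complex.add_im, Complex.sub_im, Complex.one_re, Complex.one_im,
      Complex.ofReal_re, Complex.ofReal_im, Complex.I_re, Complex.I_im] at this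
    rw [hp, hq]; ring_nf; ring_nf at this; linarith
  have him : a' * q + b' * p = (K - b) * ωp := by
    have := congrArg Complex.im hD2
    simp only [Complex.add_re, Complex.sub_re, Complex.mul_re, Complex.mul_im,
      Complex.add_im, Complex.sub_im, Complex.one_re, Complex.one_im,
      Complex.ofReal_re, Complex.ofReal_im, Complex.I_re, Complex.I_im] at this
    rw [hp, hq]; ring_nf; ring_nf at this; linarith
  have hA : a' * (p^2 + q^2) = ωp^2 := by
    have : a' * (p^2 + q^2) = ωp^2 * p + (K - b) * ωp * q := by
      linear_combination p * hre + q * him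
    rw [this, hp, hq]; ring
  have hApos : 0 < p^2 + q^2 := by
    rcases eq_or_lt_of_le hτj with h | h
    · rw [hp, hq, ← h]; norm_num
    · have : 0 < q := by rw [hq]; positivity
      positivity
  have hdenom : (Real.cos (ωp*τj) - K*τj)^2 + (Real.sin (ωp*τj))^2 = p^2 + q^2 := by
    have hK0 : K ≠ 0 := ne_of_gt hK
    have h1 : K^2 * ((Real.cos (ωp*τj) - K*τj)^2 + (Real.sin (ωp*τj))^2)
        = K^2 * (p^2 + q^2) := by
      rw [hp, hq]
      linear_combination (K * Real.cos (ωp*τj) + (K - b) - 2*K^2*τj) * hcos +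
        (K * Real.sin (ωp*τj) + ωp) * hsin + (1 - K^2*τj^2) * hω2
    have := mul_left_cancel₀ (pow_ne_zero 2 hK0) h1
    exact this
  have ha'val : a' = ωp^2 / (p^2 + q^2) := by
    field_simp
    linarith [hA]
  constructor
  · rw [hdenom, ha'val]
  · rw [ha'val]; positivity
end

section
/- Let a₁, b₁, c₁, d₁, a₂, b₂, c₂ be real and suppose iω with ω > 0 is a root of λ⁴ + a₁λ³ + b₁λ² + c₁λ + d₁ + (a₂λ³ + b₂λ² + c₂λ)e^{−λτ} = 0 for some τ ≥ 0. Then z = ω² satisfies z⁴ + p z³ + q z² + u z + v = 0, where p = a₁² − 2b₁ − a₂², q = b₁² + 2d₁ − 2a₁c₁ − b₂² + 2a₂c₂, u = c₁² − 2b₁d₁ − c₂², v = d₁². -/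
theorem quartic_in_z (a1 b1 c1 d1 a2 b2 c2 ω τ : ℝ) (hω : ω > 0) (hτ : τ ≥ 0)
    (hroot : (Complex.I*ω)^4 + (a1:ℂ)*(Complex.I*ω)^3 + (b1:ℂ)*(Complex.I*ω)^2
        + (c1:ℂ)*(Complex.I*ω) + (d1:ℂ)
        + ((a2:ℂ)*(Complex.I*ω)^3 + (b2:ℂ)*(Complex.I*ω)^2 + (c2:ℂ)*(Complex.I*ω))
          * Complex.exp (-(Complex.I*ω)*τ) = 0) :
    let p := a1^2 - 2*b1 - a2^2
    let q := b1^2 + 2*d1 - 2*a1*c1 - b2^2 + 2*a2*c2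
    let u := c1^2 - 2*b1*d1 - c2^2
    let v := d1^2
    let z := ω^2
    z^4 + p*z^3 + q*z^2 + u*z + v = 0 := by
  intro p q u v z
  have hexp : Complex.exp (-(Complex.I*ω)*τ)
      = (Real.cos (ω*τ) : ℂ) - Complex.I * (Real.sin (ω*τ) : ℂ) := by
    have harg : -(Complex.I*ω)*τ = ((-(ω*τ) : ℝ) : ℂ) * Complex.I := by
      push_cast; ring
    rw [harg, Complex.exp_mul_I, ← Complex.ofReal_cos, ← Complex.ofReal_sin,
      Real.cos_neg, Real.sin_neg]
    push_cast; ring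
  have e2 : (Complex.I*(ω:ℂ))^2 = ((-(ω^2) : ℝ) : ℂ) := by
    rw [mul_pow, Complex.I_sq]; push_cast; ring
  have e3 : (Complex.I*(ω:ℂ))^3 = Complex.I * ((-(ω^3) : ℝ) : ℂ) := by
    rw [pow_succ, mul_pow, Complex.I_sq]; push_cast; ring
  have e4 : (Complex.I*(ω:ℂ))^4 = ((ω^4 : ℝ) : ℂ) := by
    rw [show (4:ℕ)=2*2 from rfl, pow_mul, mul_pow, Complex.I_sq]; push_cast; ring
  rw [hexp, e2, e3, e4] at hroot
  set c := Real.cos (ω*τ)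
  set s := Real.sin (ω*τ)
  have hpy : s^2 + c^2 = 1 := Real.sin_sq_add_cos_sq (ω*τ)
  have h1 := congrArg Complex.re hroot
  have h2 := congrArg Complex.im hroot
  simp only [Complex.add_re, Complex.add_im, Complex.mul_re, Complex.mul_im,
    Complex.sub_re, Complex.sub_im, Complex.I_re, Complex.I_im, Complex.ofReal_re,
    Complex.ofReal_im, Complex.zero_re, Complex.zero_im] at h1 h2
  ring_nf at h1 h2
  show (ω^2)^4 + (a1^2 - 2*b1 - a2^2)*(ω^2)^3
      + (b1^2 + 2*d1 - 2*a1*c1 - b2^2 + 2*a2*c2)*(ω^2)^2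
      + (c1^2 - 2*b1*d1 - c2^2)*(ω^2) + d1^2 = 0
  linear_combination ((ω^4 - b1*ω^2 + d1) - (-b2*ω^2)*c - (-a2*ω^3+c2*ω)*s) * h1
    + ((-a1*ω^3+c1*ω) - (-a2*ω^3+c2*ω)*c + (-b2*ω^2)*s) * h2
    + ((-a2*ω^3+c2*ω)^2 + (-b2*ω^2)^2) * hpy
end

section
/- With R, Q real-coefficient polynomials as above and h the real quartic with h(ω²) = |R(iω)|² − |Q(iω)|², if iω₀ (ω₀ > 0) is a multiple root of R(λ) + Q(λ)e^{−λτ₀} = 0 for some real τ₀ ≥ 0 with R(iω₀) ≠ 0, then h'(ω₀²) = 0. -/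
theorem multiple_root_implies_deriv_zero (a1 b1 c1 d1 a2 b2 c2 ω0 τ0 : ℝ)
    (hω : ω0 > 0) (hτ : τ0 ≥ 0) :
    let R : ℂ → ℂ := fun lam => lam^4 + (a1:ℂ)*lam^3 + (b1:ℂ)*lam^2 + (c1:ℂ)*lam + (d1:ℂ)
    let R' : ℂ → ℂ := fun lam => 4*lam^3 + 3*(a1:ℂ)*lam^2 + 2*(b1:ℂ)*lam + (c1:ℂ)
    let Q : ℂ → ℂ := fun lam => (a2:ℂ)*lam^3 + (b2:ℂ)*lam^2 + (c2:ℂ)*lam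
    let Q' : ℂ → ℂ := fun lam => 3*(a2:ℂ)*lam^2 + 2*(b2:ℂ)*lam + (c2:ℂ)
    let p := a1^2 - 2*b1 - a2^2
    let q := b1^2 + 2*d1 - 2*a1*c1 - b2^2 + 2*a2*c2
    let u := c1^2 - 2*b1*d1 - c2^2
    let h' : ℝ → ℝ := fun z => 4*z^3 + 3*p*z^2 + 2*q*z + u
    let lam0 : ℂ := Complex.I * ω0
    R lam0 + Q lam0 * Complex.exp (-lam0 * τ0) = 0 →
    R lam0 ≠ 0 →
    R' lam0 + Q' lam0 * Complex.exp (-lam0 * τ0) - (τ0:ℂ) * Q lam0 * Complex.exp (-lam0 * τ0) = 0 →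
    h' (ω0^2) = 0 := by
  intro R R' Q Q' p q u h' lam0 h1 hRne h2
  -- explicit component forms
  have hA : R lam0 = Complex.ofReal (ω0^4 - b1*ω0^2 + d1) + Complex.ofReal (c1*ω0 - a1*ω0^3) * Complex.I := by
    simp only [R, lam0]
    apply Complex.ext <;> simp [Complex.mul_re, Complex.mul_im, pow_succ] <;> ring
  have hC : R' lam0 = Complex.ofReal (c1 - 3*a1*ω0^2) + Complex.ofReal (2*b1*ω0 - 4*ω0^3) * Complex.I := by
    simp only [R', lam0]
    apply Complex.ext <;> simp [Complex.mul_re, Complex.mul_im, pow_succ] <;> ring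
  have hA2 : Q lam0 = Complex.ofReal (-b2*ω0^2) + Complex.ofReal (c2*ω0 - a2*ω0^3) * Complex.I := by
    simp only [Q, lam0]
    apply Complex.ext <;> simp [Complex.mul_re, Complex.mul_im, pow_succ] <;> ring
  have hC2 : Q' lam0 = Complex.ofReal (c2 - 3*a2*ω0^2) + Complex.ofReal (2*b2*ω0) * Complex.I := by
    simp only [Q', lam0]
    apply Complex.ext <;> simp [Complex.mul_re, Complex.mul_im, pow_succ] <;> ring
  set A := ω0^4 - b1*ω0^2 + d1 with hAdef
  set B := c1*ω0 - a1*ω0^3 with hBdef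
  set C := c1 - 3*a1*ω0^2 with hCdef
  set D := 2*b1*ω0 - 4*ω0^3 with hDdef
  set A2 := -b2*ω0^2 with hA2def
  set B2 := c2*ω0 - a2*ω0^3 with hB2def
  set C2 := c2 - 3*a2*ω0^2 with hC2def
  set D2 := 2*b2*ω0 with hD2def
  -- key complex equation (no exponential)
  have hI : R' lam0 * Q lam0 = Q' lam0 * R lam0 - (τ0:ℂ) * (Q lam0 * R lam0) := by
    linear_combination (Q lam0) * h2 - (Q' lam0 - (τ0:ℂ) * Q lam0) * h1
  rw [hA, hC, hA2, hC2] at hI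
  have hre := congrArg Complex.re hI
  have him := congrArg Complex.im hI
  simp [Complex.mul_re, Complex.mul_im] at hre him
  -- |Q| = |R|
  have hQE : Q lam0 * Complex.exp (-lam0 * τ0) = -R lam0 := by linear_combination h1
  have habsE : ‖Complex.exp (-lam0 * τ0)‖ = 1 := by
    rw [Complex.norm_exp]
    simp [lam0, Complex.mul_re]
  have habs : ‖Q lam0‖ = ‖R lam0‖ := by
    have h := congrArg norm hQE
    rw [norm_mul, habsE, mul_one, norm_neg] at h
    exact h
  have hn : A2^2 + B2^2 = A^2 + B^2 := by
    have h := congrArg (fun x => x^2) habs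
    simp only [Complex.sq_norm] at h
    rw [hA, hA2] at h
    simp [Complex.normSq_apply] at h
    linarith [h]
  -- normSq R ≠ 0
  have hpos : A^2 + B^2 > 0 := by
    have h := Complex.normSq_pos.mpr hRne
    rw [hA] at h
    simp [Complex.normSq_apply] at h
    nlinarith [h]
  -- cancel to get Im(R' conj R) = Im(Q' conj Q)
  have key2 : (D*A - C*B) * (A^2 + B^2) = (D2*A2 - C2*B2) * (A^2 + B^2) := by
    linear_combination (A*A2 - B*B2) * him - (A*B2 + B*A2) * hre - (D*A - C*B) * hn
  have key : D*A - C*B = D2*A2 - C2*B2 :=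
    mul_right_cancel₀ (ne_of_gt hpos) key2
  -- conclude
  have hfin : ω0 * h' (ω0^2) = 0 := by
    simp only [h', p, q, u, hAdef, hBdef, hCdef, hDdef, hA2def, hB2def, hC2def, hD2def] at key ⊢
    linear_combination -key
  have := mul_eq_zero.mp hfin
  rcases this with h | h
  · exact absurd h (ne_of_gt hω)
  · exact h
end
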